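/- Let X be a one-step shift of finite type over a finite alphabet with 0–1 adjacency (transition) matrix M such that every entry of M² is strictly positive, and let σ be the shift map. Take the uniform system of coefficients c_S^n = 2^{−n} for all S ⊆ n*. Then the topological average sample complexity with respect to the time-zero cover satisfies Asc(X,𝒰₀,σ) = (1/4) · Σ_{k=1}^∞ log|ℒ_k(X)| / 2^k, where ℒ_k(X) is the set of k-blocks occurring in points of X. -/

import Mathlib

open Set Filter Topology

/-- Minimal cardinality of a subcover of a family of sets covering `X`. -/
noncomputable def coverNum {X : Type*} (𝒰 : Set (Set X)) : ℕ :=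
  sInf {m | ∃ F : Finset (Set X), ↑F ⊆ 𝒰 ∧ F.card = m ∧ ⋃₀ (F : Set (Set X)) = Set.univ}

/-- The join `⋁_{i ∈ S} T^{-i} 𝒰` of preimages of a cover along a set of times `S ⊆ n*`. -/
def joinCover {X : Type*} (T : X → X) (𝒰 : Set (Set X)) {n : ℕ} (S : Finset (Fin n)) :
    Set (Set X) :=
  {V | ∃ f : Fin n → Set X, (∀ i, f i ∈ 𝒰) ∧ V = ⋂ i ∈ S, (T^[(i : ℕ)]) ⁻¹' f i}

/-- The one-step SFT determined by a 0-1 transition relation `M` on the alphabet `A`. -/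
def sftSpace {A : Type*} (M : A → A → Prop) : Type _ :=
  {x : ℤ → A // ∀ i : ℤ, M (x i) (x (i + 1))}

/-- The shift map on the SFT. -/
def sftShift {A : Type*} (M : A → A → Prop) : sftSpace M → sftSpace M :=
  fun x => ⟨fun i => x.1 (i + 1), fun i => by
    simpa [add_assoc] using x.2 (i + 1)⟩

/-- The time-zero cover (and partition) of the SFT by cylinder sets `{x : x₀ = a}`. -/
def timeZeroCover {A : Type*} (M : A → A → Prop) : Set (Set (sftSpace M)) :=
  Set.range fun a : A => {x : sftSpace M | x.1 0 = a}

/-- The language of the SFT: the set of `k`-blocks occurring in points of `X`. -/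
def sftLang {A : Type*} (M : A → A → Prop) (k : ℕ) : Set (Fin k → A) :=
  {w | ∃ x : sftSpace M, ∃ i : ℤ, ∀ j : Fin k, w j = x.1 (i + (j : ℤ))}

section Basics
variable {A : Type*} (M : A → A → Prop) (hM2 : ∀ a b : A, ∃ c : A, M a c ∧ M c b)

/-- a successor function: `M a (nxt a)` and `M (nxt a) a`. -/
noncomputable def nxt (a : A) : A := (hM2 a a).choose

lemma nxt_l (a : A) : M a (nxt M hM2 a) := (hM2 a a).choose_spec.1
lemma nxt_r (a : A) : M (nxt M hM2 a) a := (hM2 a a).choose_spec.2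

/-- a basepoint -/
noncomputable def basePt [Nonempty A] : sftSpace M := by
  refine ⟨fun i => (nxt M hM2)^[i.natAbs] (Classical.arbitrary A), fun i => ?_⟩
  simp only []
  rcases le_or_gt 0 i with h | h
  · have : (i+1).natAbs = i.natAbs + 1 := by omega
    rw [this, Function.iterate_succ_apply']
    exact nxt_l M hM2 _
  · have : i.natAbs = (i+1).natAbs + 1 := by omega
    rw [this, Function.iterate_succ_apply']
    exact nxt_r M hM2 _

/-- shift by an arbitrary integer -/
def zshift (t : ℤ) (x : sftSpace M) : sftSpace M :=
  ⟨fun i => x.1 (i + t), fun i => by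
    have := x.2 (i + t)
    have h : i + 1 + t = i + t + 1 := by ring
    simpa [h] using this⟩

/-- glue two points with a two-step bridge at `t`: agrees with `x` on `(-∞,t]`
and with `y` on `[t+2,∞)`. -/
noncomputable def glue (x y : sftSpace M) (t : ℤ) : sftSpace M := by
  classical
  refine ⟨fun j => if j ≤ t then x.1 j else if j = t + 1 then
      (hM2 (x.1 t) (y.1 (t+2))).choose else y.1 j, fun j => ?_⟩
  simp only []
  rcases lt_trichotomy j t with h | h | h
  · rw [if_pos h.le, if_pos (by omega : j + 1 ≤ t)]
    exact x.2 j
  · subst h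
    rw [if_pos le_rfl, if_neg (by omega), if_pos rfl]
    exact (hM2 (x.1 j) (y.1 (j+2))).choose_spec.1
  · rcases eq_or_lt_of_le (by omega : t + 1 ≤ j) with h1 | h1
    · subst h1
      rw [if_neg (by omega), if_pos rfl, if_neg (by omega), if_neg (by omega)]
      have := (hM2 (x.1 t) (y.1 (t+2))).choose_spec.2
      have e : t + 1 + 1 = t + 2 := by ring
      rw [e]
      exact this
    · rw [if_neg (by omega), if_neg (by omega), if_neg (by omega), if_neg (by omega)]
      exact y.2 j

lemma glue_left (x y : sftSpace M) (t : ℤ) {j : ℤ} (hj : j ≤ t) :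
    (glue M hM2 x y t).1 j = x.1 j := by
  show (if j ≤ t then x.1 j else _) = x.1 j
  rw [if_pos hj]

lemma glue_right (x y : sftSpace M) (t : ℤ) {j : ℤ} (hj : t + 2 ≤ j) :
    (glue M hM2 x y t).1 j = y.1 j := by
  show (if j ≤ t then x.1 j else if j = t + 1 then _ else y.1 j) = y.1 j
  rw [if_neg (by omega), if_neg (by omega)]

end Basics

set_option linter.unusedSectionVars false

section Patt
variable {A : Type*} [Fintype A] [Nonempty A] (M : A → A → Prop)

lemma iter_shift (x : sftSpace M) (m : ℕ) (j : ℤ) :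
    ((sftShift M)^[m] x).1 j = x.1 (j + m) := by
  induction m generalizing x with
  | zero => simp
  | succ m ih =>
    rw [Function.iterate_succ_apply, ih]
    show x.1 (j + m + 1) = _
    have : j + (m:ℤ) + 1 = j + ((m:ℕ)+1 : ℕ) := by push_cast; ring
    rw [this]

/-- The set of patterns on `T ⊆ ℕ` realized by points of the SFT (set to a default
value off `T`). -/
def patt (T : Finset ℕ) : Set (ℕ → A) :=
  {g | (∃ x : sftSpace M, ∀ i ∈ T, g i = x.1 (i : ℤ)) ∧
    ∀ i ∉ T, g i = Classical.arbitrary A}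

lemma patt_finite (T : Finset ℕ) : (patt M T).Finite := by
  classical
  have hinj : Set.InjOn (fun g : ℕ → A => fun i : {i // i ∈ T} => g i.1) (patt M T) := by
    intro g hg g' hg' h
    funext i
    by_cases hi : i ∈ T
    · exact congrFun h ⟨i, hi⟩
    · rw [hg.2 i hi, hg'.2 i hi]
  exact Set.Finite.of_finite_image (Set.toFinite _) hinj

/-- The pattern of a point. -/
noncomputable def patOf (T : Finset ℕ) (x : sftSpace M) : ℕ → A :=
  fun i => if i ∈ T then x.1 (i : ℤ) else Classical.arbitrary A

lemma patOf_mem (T : Finset ℕ) (x : sftSpace M) : patOf M T x ∈ patt M T := by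
  constructor
  · exact ⟨x, fun i hi => by simp [patOf, hi]⟩
  · intro i hi; simp [patOf, hi]

/-- The cylinder determined by a pattern. -/
def cell {n : ℕ} (S : Finset (Fin n)) (g : ℕ → A) : Set (sftSpace M) :=
  {x | ∀ i : Fin n, i ∈ S → x.1 ((i : ℕ) : ℤ) = g i}

lemma eq_of_mem_cells {n : ℕ} {S : Finset (Fin n)} {g g' : ℕ → A}
    (hg : g ∈ patt M (S.image Fin.val)) (hg' : g' ∈ patt M (S.image Fin.val))
    {x : sftSpace M} (hx : x ∈ cell M S g) (hx' : x ∈ cell M S g') : g = g' := by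
  funext i
  by_cases hi : i ∈ S.image Fin.val
  · obtain ⟨j, hjS, rfl⟩ := Finset.mem_image.mp hi
    rw [← hx j hjS, ← hx' j hjS]
  · rw [hg.2 i hi, hg'.2 i hi]

lemma mem_cell_patOf {n : ℕ} (S : Finset (Fin n)) (x : sftSpace M) :
    x ∈ cell M S (patOf M (S.image Fin.val) x) := by
  intro i hi
  simp [patOf, Finset.mem_image.mpr ⟨i, hi, rfl⟩]

lemma cell_nonempty {n : ℕ} {S : Finset (Fin n)} {g : ℕ → A}
    (hg : g ∈ patt M (S.image Fin.val)) : (cell M S g).Nonempty := by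
  obtain ⟨x, hx⟩ := hg.1
  exact ⟨x, fun i hi => (hx i (Finset.mem_image.mpr ⟨i, hi, rfl⟩)).symm⟩

lemma cell_mem_join {n : ℕ} (S : Finset (Fin n)) (g : ℕ → A) :
    cell M S g ∈ joinCover (sftShift M) (timeZeroCover M) S := by
  refine ⟨fun i => {x : sftSpace M | x.1 0 = g i}, fun i => ⟨g i, rfl⟩, ?_⟩
  ext x
  simp only [cell, Set.mem_setOf_eq, Set.mem_iInter, Set.mem_preimage]
  refine forall_congr' fun i => forall_congr' fun _ => ?_
  rw [show ((sftShift M)^[(i:ℕ)] x).1 0 = x.1 (0 + (i:ℕ)) from iter_shift M x _ 0,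
    zero_add]

lemma join_nonempty_eq_cell {n : ℕ} (S : Finset (Fin n)) {W : Set (sftSpace M)}
    (hW : W ∈ joinCover (sftShift M) (timeZeroCover M) S) (hne : W.Nonempty) :
    ∃ g ∈ patt M (S.image Fin.val), W = cell M S g := by
  obtain ⟨f, hf, rfl⟩ := hW
  obtain ⟨x, hx⟩ := hne
  choose a ha using hf
  refine ⟨patOf M (S.image Fin.val) x, patOf_mem M _ x, ?_⟩
  have hx' : ∀ i ∈ S, x.1 ((i:ℕ):ℤ) = a i := by
    intro i hi
    have := Set.mem_iInter.mp hx i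
    have h2 := Set.mem_iInter.mp this hi
    rw [← ha i] at h2
    have h3 : ((sftShift M)^[(i:ℕ)] x).1 0 = a i := h2
    rwa [iter_shift, zero_add] at h3
  ext y
  simp only [Set.mem_iInter, Set.mem_preimage, cell, Set.mem_setOf_eq]
  refine forall_congr' fun i => forall_congr' fun hi => ?_
  rw [← ha i]
  show ((sftShift M)^[(i:ℕ)] y).1 0 = a i ↔ _
  rw [iter_shift, zero_add, ← hx' i hi]
  simp [patOf, Finset.mem_image.mpr ⟨i, hi, rfl⟩, hx' i hi]

lemma coverNum_eq_card {X : Type*} {𝒰 : Set (Set X)} {D : Finset (Set X)}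
    (hD𝒰 : ↑D ⊆ 𝒰) (hne : ∀ V ∈ D, (V : Set X).Nonempty)
    (hdisj : ∀ V ∈ D, ∀ W ∈ D, V ≠ W → Disjoint V W)
    (hcov : ⋃₀ (D : Set (Set X)) = Set.univ)
    (hmax : ∀ W ∈ 𝒰, (W : Set X).Nonempty → W ∈ D) :
    coverNum 𝒰 = D.card := by
  have hmem : D.card ∈ {m | ∃ F : Finset (Set X), ↑F ⊆ 𝒰 ∧ F.card = m ∧
      ⋃₀ (F : Set (Set X)) = Set.univ} := ⟨D, hD𝒰, rfl, hcov⟩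
  refine le_antisymm (Nat.sInf_le hmem) (le_csInf ⟨_, hmem⟩ ?_)
  rintro m ⟨F, hF𝒰, rfl, hFcov⟩
  refine Finset.card_le_card fun V hV => ?_
  obtain ⟨x, hx⟩ := hne V hV
  have hx' : x ∈ ⋃₀ (F : Set (Set X)) := hFcov ▸ Set.mem_univ x
  obtain ⟨W, hWF, hxW⟩ := hx'
  have hWD : W ∈ D := hmax W (hF𝒰 hWF) ⟨x, hxW⟩
  have : V = W := by
    by_contra h
    exact Set.disjoint_left.mp (hdisj V hV W hWD h) hx hxW
  exact this ▸ hWF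

lemma coverNum_join (n : ℕ) (S : Finset (Fin n)) :
    coverNum (joinCover (sftShift M) (timeZeroCover M) S)
      = (patt M (S.image Fin.val)).ncard := by
  classical
  have hfin : ((cell M S) '' patt M (S.image Fin.val)).Finite :=
    (patt_finite M _).image _
  have hinj : Set.InjOn (cell M S) (patt M (S.image Fin.val)) := by
    intro g hg g' hg' h
    obtain ⟨x, hx⟩ := cell_nonempty M hg
    exact eq_of_mem_cells M hg hg' hx (h ▸ hx)
  have h1 : ↑hfin.toFinset ⊆ joinCover (sftShift M) (timeZeroCover M) S := by
    intro V hV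
    rw [Set.Finite.coe_toFinset] at hV
    obtain ⟨g, hg, rfl⟩ := hV
    exact cell_mem_join M S g
  have h2 : ∀ V ∈ hfin.toFinset, (V : Set (sftSpace M)).Nonempty := by
    intro V hV
    rw [Set.Finite.mem_toFinset] at hV
    obtain ⟨g, hg, rfl⟩ := hV
    exact cell_nonempty M hg
  have h3 : ∀ V ∈ hfin.toFinset, ∀ W ∈ hfin.toFinset, V ≠ W → Disjoint V W := by
    intro V hV W hW hVW
    rw [Set.Finite.mem_toFinset] at hV hW
    obtain ⟨g, hg, rfl⟩ := hV
    obtain ⟨g', hg', rfl⟩ := hW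
    rw [Set.disjoint_left]
    intro x hx hx'
    exact hVW (congrArg _ (eq_of_mem_cells M hg hg' hx hx'))
  have h4 : ⋃₀ (hfin.toFinset : Set (Set (sftSpace M))) = Set.univ := by
    refine Set.eq_univ_of_forall fun x => ?_
    refine ⟨cell M S (patOf M (S.image Fin.val) x), ?_, mem_cell_patOf M S x⟩
    rw [Set.Finite.coe_toFinset]
    exact ⟨_, patOf_mem M _ x, rfl⟩
  have h5 : ∀ W ∈ joinCover (sftShift M) (timeZeroCover M) S,
      (W : Set (sftSpace M)).Nonempty → W ∈ hfin.toFinset := by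
    intro W hW hWne
    obtain ⟨g, hg, rfl⟩ := join_nonempty_eq_cell M S hW hWne
    rw [Set.Finite.mem_toFinset]
    exact ⟨g, hg, rfl⟩
  rw [coverNum_eq_card h1 h2 h3 h4 h5, ← Set.ncard_eq_toFinset_card _ hfin,
    Set.ncard_image_of_injOn hinj]

end Patt


section Runs
open scoped Classical

variable {A : Type*} [Fintype A] [Nonempty A] (M : A → A → Prop)

/-- `(i,k)` is a maximal run of `T`. -/
def IsRun (T : Finset ℕ) (i k : ℕ) : Prop :=
  1 ≤ k ∧ (∀ j, i ≤ j → j < i + k → j ∈ T) ∧ (i = 0 ∨ i - 1 ∉ T) ∧ i + k ∉ T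

/-- The finset of maximal runs of `T`. -/
noncomputable def runs (T : Finset ℕ) : Finset (ℕ × ℕ) :=
  (T ×ˢ Finset.Icc 1 T.card).filter (fun p => IsRun T p.1 p.2)

lemma mem_runs {T : Finset ℕ} {i k : ℕ} : (i, k) ∈ runs T ↔ IsRun T i k := by
  constructor
  · exact fun h => (Finset.mem_filter.mp h).2
  · intro h
    refine Finset.mem_filter.mpr ⟨Finset.mem_product.mpr ⟨?_, ?_⟩, h⟩
    · exact h.2.1 i le_rfl (by have := h.1; omega)
    · refine Finset.mem_Icc.mpr ⟨h.1, ?_⟩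
      have hsub : Finset.Ico i (i + k) ⊆ T := fun j hj => by
        rw [Finset.mem_Ico] at hj; exact h.2.1 j hj.1 hj.2
      have := Finset.card_le_card hsub
      simpa using this

lemma sftLang_nonempty (hM2 : ∀ a b : A, ∃ c : A, M a c ∧ M c b) (k : ℕ) :
    (sftLang M k).Nonempty :=
  ⟨fun j => (basePt M hM2).1 (0 + (j : ℤ)), ⟨basePt M hM2, 0, fun j => rfl⟩⟩

lemma sftLang_finite (k : ℕ) : (sftLang M k).Finite := Set.toFinite _

lemma sftLang_ncard_pos (hM2 : ∀ a b : A, ∃ c : A, M a c ∧ M c b) (k : ℕ) :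
    0 < (sftLang M k).ncard :=
  (Set.ncard_pos (sftLang_finite M k)).mpr (sftLang_nonempty M hM2 k)

end Runs


section Peel
open scoped Classical

variable {A : Type*} [Fintype A] [Nonempty A] (M : A → A → Prop)

set_option maxHeartbeats 1000000 in
lemma exists_peel (hM2 : ∀ a b : A, ∃ c : A, M a c ∧ M c b)
    (T : Finset ℕ) (hT : T.Nonempty) :
    ∃ (T' : Finset ℕ) (i k : ℕ), T'.card < T.card ∧ 1 ≤ k ∧
      runs T = insert (i, k) (runs T') ∧ (i, k) ∉ runs T' ∧
      (patt M T).ncard = (patt M T').ncard * (sftLang M k).ncard := by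
  classical
  set m := T.max' hT with hm
  have hPm : ∀ j, m ≤ j → j ≤ m → j ∈ T := fun j h1 h2 => by
    have : j = m := le_antisymm h2 h1
    exact this ▸ T.max'_mem hT
  have hex : ∃ i, ∀ j, i ≤ j → j ≤ m → j ∈ T := ⟨m, hPm⟩
  set i := Nat.find hex with hi
  have hub : ∀ j, i ≤ j → j ≤ m → j ∈ T := Nat.find_spec hex
  have him : i ≤ m := Nat.find_le hPm
  have hlemax : ∀ j ∈ T, j ≤ m := fun j hj => T.le_max' j hj
  have hmin : 1 ≤ i → i - 1 ∉ T := by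
    intro h1 hcon
    refine Nat.find_min hex (show i - 1 < i by omega) fun j hj1 hj2 => ?_
    rcases eq_or_lt_of_le hj1 with h | h
    · exact h ▸ hcon
    · exact hub j (by omega) hj2
  set k := m + 1 - i with hk
  set T' := T.filter (· < i) with hT'
  have hT'mem : ∀ j, j ∈ T' ↔ j ∈ T ∧ j < i := fun j => Finset.mem_filter
  have hmemT : ∀ j, j ∈ T ↔ j ∈ T' ∨ (i ≤ j ∧ j ≤ m) := by
    intro j
    constructor
    · intro hj
      rcases lt_or_ge j i with h | h
      · exact Or.inl ((hT'mem j).mpr ⟨hj, h⟩)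
      · exact Or.inr ⟨h, hlemax j hj⟩
    · rintro (h | ⟨h1, h2⟩)
      · exact ((hT'mem j).mp h).1
      · exact hub j h1 h2
  have hT'2 : ∀ j ∈ T', j + 2 ≤ i := by
    intro j hj
    obtain ⟨hjT, hji⟩ := (hT'mem j).mp hj
    have h1 : 1 ≤ i := by omega
    have := hmin h1
    have : j ≠ i - 1 := fun h => this (h ▸ hjT)
    omega
  have hm1 : m + 1 ∉ T := fun h => by have := hlemax _ h; omega
  have hiT : i ∈ T := hub i le_rfl him
  have hcard : T'.card < T.card := by
    refine Finset.card_lt_card ?_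
    rw [Finset.ssubset_iff_of_subset (Finset.filter_subset _ _)]
    exact ⟨i, hiT, fun h => by have := ((hT'mem i).mp h).2; omega⟩
  set K := Finset.Ico i (m + 1) with hK
  have hKmem : ∀ j, j ∈ K ↔ i ≤ j ∧ j ≤ m := fun j => by
    rw [hK, Finset.mem_Ico]; omega
  refine ⟨T', i, k, hcard, by omega, ?_, ?_, ?_⟩
  · -- runs split
    ext p
    obtain ⟨a, b⟩ := p
    rw [mem_runs, Finset.mem_insert, mem_runs, Prod.mk.injEq]
    constructor
    · rintro ⟨hb, hint, hleft, hright⟩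
      by_cases hai : i ≤ a
      · left
        have haT : a ∈ T := hint a le_rfl (by omega)
        have ham : a ≤ m := hlemax a haT
        have ha : a = i := by
          by_contra h
          have h1 : i ≤ a - 1 := by omega
          have : a - 1 ∈ T := hub (a - 1) h1 (by omega)
          rcases hleft with h0 | h2
          · omega
          · exact h2 this
        have h1 : a + b - 1 ∈ T := hint (a + b - 1) (by omega) (by omega)
        have h2 : a + b - 1 ≤ m := hlemax _ h1
        have h3 : ¬ (a + b ≤ m) := fun h => hright (hub (a + b) (by omega) h)
        exact ⟨ha, by omega⟩
      · right
        push_neg at hai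
        have hi1 : 1 ≤ i := by omega
        have hlt : a + b ≤ i - 1 := by
          by_contra h
          have : i - 1 ∈ T := hint (i - 1) (by omega) (by omega)
          exact hmin hi1 this
        have hsub : ∀ j, a ≤ j → j < a + b → j ∈ T' := fun j h1 h2 =>
          (hT'mem j).mpr ⟨hint j h1 h2, by omega⟩
        refine ⟨hb, hsub, ?_, ?_⟩
        · rcases hleft with h | h
          · exact Or.inl h
          · exact Or.inr fun hc => h ((hT'mem _).mp hc).1
        · exact fun hc => hright ((hT'mem _).mp hc).1
    · rintro (⟨ha, hb⟩ | ⟨hb, hint, hleft, hright⟩)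
      · subst ha; subst hb
        refine ⟨by omega, fun j h1 h2 => hub j h1 (by omega), ?_, ?_⟩
        · rcases Nat.eq_zero_or_pos i with h | h
          · exact Or.inl h
          · exact Or.inr (hmin h)
        · have : i + (m + 1 - i) = m + 1 := by omega
          rw [this]; exact hm1
      · have haT' : a ∈ T' := hint a le_rfl (by omega)
        have ha2 : a + 2 ≤ i := hT'2 a haT'
        have hab : a + b - 1 ∈ T' := hint (a + b - 1) (by omega) (by omega)
        have hab2 : a + b + 1 ≤ i := by have := hT'2 _ hab; omega
        refine ⟨hb, fun j h1 h2 => ((hT'mem j).mp (hint j h1 h2)).1, ?_, ?_⟩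
        · rcases hleft with h | h
          · exact Or.inl h
          · refine Or.inr fun hc => h ((hT'mem _).mpr ⟨hc, by omega⟩)
        · exact fun hc => hright ((hT'mem _).mpr ⟨hc, by omega⟩)
  · -- (i,k) not a run of T'
    rw [mem_runs]
    rintro ⟨hb, hint, -, -⟩
    have : i ∈ T' := hint i le_rfl (by omega)
    have := ((hT'mem i).mp this).2
    omega
  · -- the cardinality identity
    set Φ : (ℕ → A) → (ℕ → A) × (Fin k → A) := fun g =>
      (fun j => if j ∈ K then Classical.arbitrary A else g j,
       fun j => g (i + (j : ℕ))) with hΦ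
    have hinj : Set.InjOn Φ (patt M T) := by
      intro g hg g2 hg2 heq
      funext j
      by_cases hj : j ∈ K
      · have hjm := (hKmem j).mp hj
        have h2 := congrFun (congrArg Prod.snd heq) ⟨j - i, by omega⟩
        simp only [hΦ] at h2
        have he : i + (j - i) = j := by omega
        rw [he] at h2
        exact h2
      · have h1 := congrFun (congrArg Prod.fst heq) j
        simp only [hΦ, if_neg hj] at h1
        exact h1
    have himg : Φ '' patt M T = patt M T' ×ˢ sftLang M k := by
      apply Set.Subset.antisymm
      · rintro - ⟨g, hg, rfl⟩
        obtain ⟨x, hx⟩ := hg.1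
        constructor
        · -- first component in patt T'
          refine ⟨⟨x, fun j hj => ?_⟩, fun j hj => ?_⟩
          · have hjm := (hT'mem j).mp hj
            have hjK : j ∉ K := fun h => by have := (hKmem j).mp h; omega
            simp only [hΦ, if_neg hjK]
            exact hx j hjm.1
          · by_cases hjK : j ∈ K
            · simp [hΦ, hjK]
            · simp only [hΦ, if_neg hjK]
              refine hg.2 j fun hjT => hj ?_
              have := hlemax j hjT
              have hji : j < i := by
                rcases (hmemT j).mp hjT with h | h
                · exact ((hT'mem j).mp h).2
                · exact absurd ((hKmem j).mpr ⟨h.1, h.2⟩) hjK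
              exact (hT'mem j).mpr ⟨hjT, hji⟩
        · -- second component in language
          refine ⟨x, (i : ℤ), fun j => ?_⟩
          have hjT : i + (j : ℕ) ∈ T := hub _ (by omega) (by have := j.2; omega)
          have := hx _ hjT
          simp only [hΦ]
          rw [this]
          norm_cast
      · rintro ⟨p, w⟩ hpw
        rw [Set.mem_prod] at hpw
        obtain ⟨hp, hw⟩ := hpw
        replace hp : p ∈ patt M T' := hp
        replace hw : w ∈ sftLang M k := hw
        set g : ℕ → A := fun j =>
          if h : j ∈ K then w ⟨j - i, by have := (Finset.mem_Ico.mp h); omega⟩ else p j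
          with hg
        obtain ⟨y, t, hy⟩ := hw
        set z := zshift M (t - i) y with hz
        have hzval : ∀ j, j ∈ K → g j = z.1 (j : ℤ) := by
          intro j hj
          have hjm := (hKmem j).mp hj
          have hji : j - i < k := by omega
          have h1 : g j = w ⟨j - i, hji⟩ := by
            simp only [hg]
            rw [dif_pos hj]
          rw [h1, hy ⟨j - i, hji⟩]
          show y.1 (t + ((j - i : ℕ) : ℤ)) = y.1 ((j : ℤ) + (t - (i : ℤ)))
          congr 1
          have : ((j - i : ℕ) : ℤ) = (j : ℤ) - (i : ℤ) := by
            push_cast [Nat.cast_sub hjm.1]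
            ring
          rw [this]; ring
        have hgpatt : g ∈ patt M T := by
          constructor
          · -- a realizing point
            by_cases hTe : T' = ∅
            · refine ⟨z, fun j hj => ?_⟩
              rcases (hmemT j).mp hj with h | h
              · rw [hTe] at h; exact absurd h (Finset.notMem_empty j)
              · exact hzval j ((hKmem j).mpr h)
            · obtain ⟨x', hx'⟩ := hp.1
              refine ⟨glue M hM2 x' z ((i : ℤ) - 2), fun j hj => ?_⟩
              rcases (hmemT j).mp hj with h | h
              · have hj2 : (j : ℤ) ≤ (i : ℤ) - 2 := by
                  have := hT'2 j h
                  omega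
                rw [glue_left M hM2 x' z _ hj2]
                have hjK : j ∉ K := fun hc => by
                  have := (hKmem j).mp hc
                  have := hT'2 j h
                  omega
                have : g j = p j := by simp only [hg]; rw [dif_neg hjK]
                rw [this]
                exact hx' j h
              · have hj2 : (i : ℤ) - 2 + 2 ≤ (j : ℤ) := by
                  have : (i : ℤ) ≤ (j : ℤ) := by exact_mod_cast h.1
                  omega
                rw [glue_right M hM2 x' z _ hj2]
                exact hzval j ((hKmem j).mpr h)
          · intro j hj
            have hjK : j ∉ K := fun hc => hj (hub j ((hKmem j).mp hc).1 ((hKmem j).mp hc).2)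
            have hjT' : j ∉ T' := fun hc => hj ((hT'mem j).mp hc).1
            simp only [hg]
            rw [dif_neg hjK]
            exact hp.2 j hjT'
        refine ⟨g, hgpatt, ?_⟩
        simp only [hΦ, Prod.mk.injEq]
        constructor
        · funext j
          by_cases hjK : j ∈ K
          · rw [if_pos hjK]
            have hjT' : j ∉ T' := fun hc => by
              have := ((hT'mem j).mp hc).2
              have := ((hKmem j).mp hjK).1
              omega
            exact (hp.2 j hjT').symm
          · rw [if_neg hjK]
            simp only [hg]
            rw [dif_neg hjK]
        · funext j
          have hjK : i + (j : ℕ) ∈ K := (hKmem _).mpr ⟨by omega, by have := j.2; omega⟩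
          simp only [hg]
          rw [dif_pos hjK]
          congr 1
          ext
          simp
    have h1 : (patt M T).ncard = (patt M T' ×ˢ sftLang M k).ncard := by
      rw [← Set.ncard_image_of_injOn hinj, himg]
    rw [h1, ← Nat.card_coe_set_eq, ← Nat.card_coe_set_eq, ← Nat.card_coe_set_eq,
      Nat.card_congr (Equiv.Set.prod _ _), Nat.card_prod]

end Peel


section Prod
open scoped Classical
variable {A : Type*} [Fintype A] [Nonempty A] (M : A → A → Prop)

lemma patt_empty (hM2 : ∀ a b : A, ∃ c : A, M a c ∧ M c b) :
    patt M (∅ : Finset ℕ) = {fun _ => Classical.arbitrary A} := by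
  ext g
  constructor
  · intro h
    exact funext fun i => h.2 i (Finset.notMem_empty i)
  · intro h
    rw [Set.mem_singleton_iff] at h
    subst h
    exact ⟨⟨basePt M hM2, fun i hi => absurd hi (Finset.notMem_empty i)⟩,
      fun i _ => rfl⟩

lemma runs_empty : runs (∅ : Finset ℕ) = ∅ := by
  ext p
  simp only [Finset.notMem_empty, iff_false]
  intro hp
  obtain ⟨a, b⟩ := p
  have h := (mem_runs.mp hp)
  exact Finset.notMem_empty a (h.2.1 a le_rfl (by have := h.1; omega))

lemma patt_ncard_prod (hM2 : ∀ a b : A, ∃ c : A, M a c ∧ M c b) (T : Finset ℕ) :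
    (patt M T).ncard = ∏ p ∈ runs T, (sftLang M p.2).ncard := by
  classical
  suffices H : ∀ n (T : Finset ℕ), T.card = n →
      (patt M T).ncard = ∏ p ∈ runs T, (sftLang M p.2).ncard from H T.card T rfl
  intro n
  induction n using Nat.strong_induction_on with
  | _ n ih =>
    intro T hn
    rcases T.eq_empty_or_nonempty with rfl | hT
    · rw [patt_empty M hM2, runs_empty]
      simp
    · obtain ⟨T', i, k, hcard, hk, hsplit, hnot, hcount⟩ := exists_peel M hM2 T hT
      rw [hsplit, Finset.prod_insert hnot, hcount,
        ih T'.card (by omega) T' rfl, mul_comm]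

lemma log_patt (hM2 : ∀ a b : A, ∃ c : A, M a c ∧ M c b) (T : Finset ℕ) :
    Real.log ((patt M T).ncard) = ∑ p ∈ runs T, Real.log ((sftLang M p.2).ncard) := by
  rw [patt_ncard_prod M hM2 T, Nat.cast_prod, Real.log_prod]
  intro p hp
  exact_mod_cast (sftLang_ncard_pos M hM2 p.2).ne'

end Prod


section Count2
open scoped Classical

/-- number of subsets with prescribed trace on `B`. -/
lemma card_trace {n : ℕ} (B C : Finset (Fin n)) (hC : C ⊆ B) :
    (Finset.univ.filter (fun S : Finset (Fin n) => S ∩ B = C)).card = 2 ^ (n - B.card) := by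
  classical
  have h : (Finset.univ.filter (fun S : Finset (Fin n) => S ∩ B = C)).card
      = Bᶜ.powerset.card := by
    refine Finset.card_nbij' (fun S => S \ B) (fun D => D ∪ C) ?_ ?_ ?_ ?_
    · intro S hS
      rw [Finset.mem_coe, Finset.mem_filter] at hS
      rw [Finset.mem_coe, Finset.mem_powerset]
      intro j hj
      rw [Finset.mem_compl]
      exact (Finset.mem_sdiff.mp hj).2
    · intro D hD
      rw [Finset.mem_coe, Finset.mem_powerset] at hD
      rw [Finset.mem_coe, Finset.mem_filter]
      refine ⟨Finset.mem_univ _, ?_⟩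
      rw [Finset.union_inter_distrib_right, Finset.inter_eq_left.mpr hC]
      have : D ∩ B = ∅ := Finset.eq_empty_of_forall_notMem fun j hj => by
        have h1 := Finset.mem_compl.mp (hD (Finset.mem_inter.mp hj).1)
        exact h1 (Finset.mem_inter.mp hj).2
      rw [this, Finset.empty_union]
    · intro S hS
      rw [Finset.mem_coe, Finset.mem_filter] at hS
      show S \ B ∪ C = S
      rw [← hS.2]
      exact Finset.sdiff_union_inter S B
    · intro D hD
      rw [Finset.mem_coe, Finset.mem_powerset] at hD
      show (D ∪ C) \ B = D
      rw [Finset.union_sdiff_distrib]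
      have h1 : D \ B = D := Finset.sdiff_eq_self_of_disjoint (Finset.disjoint_left.mpr
        fun j hj => Finset.mem_compl.mp (hD hj))
      have h2 : C \ B = ∅ := Finset.sdiff_eq_empty_iff_subset.mpr hC
      rw [h1, h2, Finset.union_empty]
  rw [h, Finset.card_powerset, Finset.card_compl, Fintype.card_fin]

/-- boundary weight of a run `(i,k)` inside `n*`. -/
def bw (n i k : ℕ) : ℕ := (if 1 ≤ i then 1 else 0) + (if i + k < n then 1 else 0)

lemma run_count {n i k : ℕ} (hk : 1 ≤ k) (hik : i + k ≤ n) :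
    (Finset.univ.filter
      (fun S : Finset (Fin n) => (i, k) ∈ runs (S.image Fin.val))).card
      = 2 ^ (n - (k + bw n i k)) := by
  classical
  have hCsub : ∀ m ∈ Finset.Ico i (i + k), m < n := fun m hm => by
    rw [Finset.mem_Ico] at hm; omega
  have hBsub : ∀ m ∈ (Finset.Ico (i - 1) (i + k + 1)) ∩ Finset.range n, m < n :=
    fun m hm => Finset.mem_range.mp (Finset.mem_inter.mp hm).2
  set C := (Finset.Ico i (i + k)).attachFin hCsub with hC
  set B := ((Finset.Ico (i - 1) (i + k + 1)) ∩ Finset.range n).attachFin hBsub with hB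
  have hCmem : ∀ j : Fin n, j ∈ C ↔ (i ≤ (j : ℕ) ∧ (j : ℕ) < i + k) := fun j => by
    rw [hC, Finset.mem_attachFin, Finset.mem_Ico]
  have hBmem : ∀ j : Fin n, j ∈ B ↔ (i - 1 ≤ (j : ℕ) ∧ (j : ℕ) < i + k + 1) := fun j => by
    rw [hB, Finset.mem_attachFin, Finset.mem_inter, Finset.mem_Ico, Finset.mem_range]
    exact ⟨fun h => h.1, fun h => ⟨h, j.2⟩⟩
  have hCB : C ⊆ B := fun j hj => by
    rw [hCmem] at hj; rw [hBmem]; omega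
  have himg : ∀ (S : Finset (Fin n)) (t : ℕ),
      t ∈ S.image Fin.val ↔ ∃ h : t < n, (⟨t, h⟩ : Fin n) ∈ S := by
    intro S t
    rw [Finset.mem_image]
    constructor
    · rintro ⟨j, hj, rfl⟩
      exact ⟨j.2, by simpa using hj⟩
    · rintro ⟨h, hj⟩
      exact ⟨⟨t, h⟩, hj, rfl⟩
  have hiff : ∀ S : Finset (Fin n),
      (i, k) ∈ runs (S.image Fin.val) ↔ S ∩ B = C := by
    intro S
    rw [mem_runs]
    constructor
    · rintro ⟨-, hint, hleft, hright⟩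
      ext j
      rw [Finset.mem_inter, hBmem, hCmem]
      constructor
      · rintro ⟨hjS, hjB⟩
        have hjS2 : (j : ℕ) ∈ S.image Fin.val := (himg S j).mpr ⟨j.2, by simpa using hjS⟩
        constructor
        · rcases Nat.lt_or_ge (j : ℕ) i with h | h
          · exfalso
            have hj1 : (j : ℕ) = i - 1 := by omega
            have hi1 : 1 ≤ i := by omega
            rcases hleft with h0 | h0
            · omega
            · exact h0 (hj1 ▸ hjS2)
          · exact h
        · rcases Nat.lt_or_ge (j : ℕ) (i + k) with h | h
          · exact h
          · exfalso
            have : (j : ℕ) = i + k := by omega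
            exact hright (this ▸ hjS2)
      · rintro ⟨h1, h2⟩
        have : (j : ℕ) ∈ S.image Fin.val := hint j h1 h2
        obtain ⟨h, hj⟩ := (himg S j).mp this
        refine ⟨by simpa using hj, by omega, by omega⟩
    · intro hSB
      refine ⟨hk, ?_, ?_, ?_⟩
      · intro t h1 h2
        have ht : t < n := by omega
        have : (⟨t, ht⟩ : Fin n) ∈ C := (hCmem _).mpr ⟨h1, h2⟩
        rw [← hSB, Finset.mem_inter] at this
        exact (himg S t).mpr ⟨ht, this.1⟩
      · rcases Nat.eq_zero_or_pos i with h | h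
        · exact Or.inl h
        · refine Or.inr fun hc => ?_
          obtain ⟨hlt, hj⟩ := (himg S (i - 1)).mp hc
          have : (⟨i - 1, hlt⟩ : Fin n) ∈ S ∩ B :=
            Finset.mem_inter.mpr ⟨hj, (hBmem _).mpr
              ⟨by simp only [Fin.val_mk]; omega, by simp only [Fin.val_mk]; omega⟩⟩
          rw [hSB, hCmem] at this
          simp only [Fin.val_mk] at this
          omega
      · intro hc
        obtain ⟨hlt, hj⟩ := (himg S (i + k)).mp hc
        have : (⟨i + k, hlt⟩ : Fin n) ∈ S ∩ B :=
          Finset.mem_inter.mpr ⟨hj, (hBmem _).mpr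
            ⟨by simp only [Fin.val_mk]; omega, by simp only [Fin.val_mk]; omega⟩⟩
        rw [hSB, hCmem] at this
        simp only [Fin.val_mk] at this
        omega
  have hfilter : (Finset.univ.filter
      (fun S : Finset (Fin n) => (i, k) ∈ runs (S.image Fin.val)))
      = (Finset.univ.filter (fun S : Finset (Fin n) => S ∩ B = C)) := by
    apply Finset.filter_congr
    intro S _
    simp only [hiff S]
  have hBcard : B.card = k + bw n i k := by
    rw [hB, Finset.card_attachFin, Finset.range_eq_Ico, Finset.Ico_inter_Ico,
      Nat.card_Ico, bw, max_eq_left (Nat.zero_le _)]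
    rcases Nat.lt_or_ge (i + k) n with h | h
    · rw [min_eq_left (by omega)]
      split_ifs <;> omega
    · rw [min_eq_right (by omega)]
      split_ifs <;> omega
  rw [hfilter, card_trace B C hCB, hBcard]

end Count2


section Eval
open scoped Classical
variable {A : Type*} [Fintype A] [Nonempty A] (M : A → A → Prop)

/-- log of the number of `k`-blocks -/
noncomputable def Lw (k : ℕ) : ℝ := Real.log ((sftLang M k).ncard)

lemma runs_subset_U (n : ℕ) (S : Finset (Fin n)) :
    runs (S.image Fin.val) ⊆
      (Finset.range n ×ˢ Finset.Icc 1 n).filter (fun p => p.1 + p.2 ≤ n) := by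
  rintro ⟨i, k⟩ hp
  obtain ⟨hk, hint, -, -⟩ := mem_runs.mp hp
  have h1 : i + k - 1 ∈ S.image Fin.val := hint (i + k - 1) (by omega) (by omega)
  obtain ⟨j, -, hj⟩ := Finset.mem_image.mp h1
  have h2 : i + k - 1 < n := hj ▸ j.2
  rw [Finset.mem_filter, Finset.mem_product, Finset.mem_range, Finset.mem_Icc]
  exact ⟨⟨by omega, hk, by omega⟩, by omega⟩

lemma sum_logN (hM2 : ∀ a b : A, ∃ c : A, M a c ∧ M c b) (n : ℕ) :
    ∑ S : Finset (Fin n), Real.log ((patt M (S.image Fin.val)).ncard)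
      = ∑ p ∈ (Finset.range n ×ˢ Finset.Icc 1 n).filter (fun p => p.1 + p.2 ≤ n),
          ((2 : ℝ) ^ (n - (p.2 + bw n p.1 p.2))) * Lw M p.2 := by
  classical
  set U := (Finset.range n ×ˢ Finset.Icc 1 n).filter (fun p => p.1 + p.2 ≤ n) with hU
  have step1 : ∀ S : Finset (Fin n),
      Real.log ((patt M (S.image Fin.val)).ncard)
        = ∑ p ∈ U, if p ∈ runs (S.image Fin.val) then Lw M p.2 else 0 := by
    intro S
    rw [log_patt M hM2, Finset.sum_ite_mem,
      Finset.inter_eq_right.mpr (runs_subset_U n S)]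
    rfl
  calc ∑ S : Finset (Fin n), Real.log ((patt M (S.image Fin.val)).ncard)
      = ∑ S : Finset (Fin n), ∑ p ∈ U,
          if p ∈ runs (S.image Fin.val) then Lw M p.2 else 0 := by
        exact Finset.sum_congr rfl fun S _ => step1 S
    _ = ∑ p ∈ U, ∑ S : Finset (Fin n),
          if p ∈ runs (S.image Fin.val) then Lw M p.2 else 0 := Finset.sum_comm
    _ = ∑ p ∈ U, ((2 : ℝ) ^ (n - (p.2 + bw n p.1 p.2))) * Lw M p.2 := by
        refine Finset.sum_congr rfl fun p hp => ?_
        rw [hU, Finset.mem_filter, Finset.mem_product, Finset.mem_Icc] at hp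
        rw [← Finset.sum_filter]
        rw [Finset.sum_const, nsmul_eq_mul]
        obtain ⟨i, k⟩ := p
        rw [run_count hp.1.2.1 hp.2]
        push_cast
        ring

lemma coeff_eval {n k : ℕ} (hk : 1 ≤ k) (hkn : k < n) :
    ∑ i ∈ Finset.range (n - k + 1), (2 : ℝ) ^ (n - (k + bw n i k))
      = ((n : ℝ) - k + 3) / 4 * 2 ^ (n - k) := by
  set d := n - k with hd
  have hd1 : 1 ≤ d := by omega
  have h0 : (0 : ℕ) ∉ Finset.Ico 1 (d + 1) := by simp
  have hsplit1 : Finset.range (d + 1) = insert 0 (Finset.Ico 1 (d + 1)) := by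
    ext a
    simp only [Finset.mem_range, Finset.mem_insert, Finset.mem_Ico]
    omega
  have hd2 : d ∉ Finset.Ico 1 d := by simp
  have hsplit2 : Finset.Ico 1 (d + 1) = insert d (Finset.Ico 1 d) := by
    ext a
    simp only [Finset.mem_insert, Finset.mem_Ico]
    omega
  have hf0 : (2 : ℝ) ^ (n - (k + bw n 0 k)) = 2 ^ (d - 1) := by
    have : bw n 0 k = 1 := by rw [bw]; split_ifs <;> omega
    rw [this]
    congr 1 <;> omega
  have hfd : (2 : ℝ) ^ (n - (k + bw n d k)) = 2 ^ (d - 1) := by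
    have : bw n d k = 1 := by rw [bw]; split_ifs <;> omega
    rw [this]
    congr 1 <;> omega
  have hfi : ∀ i ∈ Finset.Ico 1 d, (2 : ℝ) ^ (n - (k + bw n i k)) = 2 ^ (d - 2) := by
    intro i hi
    rw [Finset.mem_Ico] at hi
    have : bw n i k = 2 := by rw [bw]; split_ifs <;> omega
    rw [this]
    congr 1 <;> omega
  rw [hsplit1, Finset.sum_insert h0, hsplit2, Finset.sum_insert hd2, hf0, hfd,
    Finset.sum_congr rfl hfi, Finset.sum_const, Nat.card_Ico, nsmul_eq_mul]
  have hcast : ((n : ℝ) - k) = (d : ℝ) := by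
    rw [hd]
    push_cast [Nat.cast_sub hkn.le]
    ring
  rw [hcast]
  rcases Nat.eq_or_lt_of_le hd1 with h1 | h2
  · rw [← h1]
    norm_num
  · have e1 : (2 : ℝ) ^ (d - 1) * 2 = 2 ^ d := by
      rw [← pow_succ]
      congr 1
      omega
    have e2 : (2 : ℝ) ^ (d - 2) * 4 = 2 ^ d := by
      have : (4 : ℝ) = 2 ^ 2 := by norm_num
      rw [this, ← pow_add]
      congr 1
      omega
    have hdc : ((d - 1 : ℕ) : ℝ) = (d : ℝ) - 1 := by
      push_cast [Nat.cast_sub hd1]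
      ring
    rw [hdc]
    linear_combination (1 : ℝ) * e1 + ((d : ℝ) - 1) / 4 * e2 - (2 : ℝ) ^ d / 4 * 0

end Eval


section GEval
open scoped Classical
variable {A : Type*} [Fintype A] [Nonempty A] (M : A → A → Prop)

lemma G_eval (hM2 : ∀ a b : A, ∃ c : A, M a c ∧ M c b) {n : ℕ} (hn : 1 ≤ n) :
    ∑ S : Finset (Fin n), (1 / 2 ^ n : ℝ) *
        Real.log ((patt M (S.image Fin.val)).ncard)
      = (∑ k ∈ Finset.Icc 1 (n - 1), ((n : ℝ) - k + 3) / 4 * (2⁻¹) ^ k * Lw M k)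
        + (2⁻¹) ^ n * Lw M n := by
  classical
  rw [← Finset.mul_sum, sum_logN M hM2 n]
  set F : ℕ × ℕ → ℝ := fun p => (2 : ℝ) ^ (n - (p.2 + bw n p.1 p.2)) * Lw M p.2 with hF
  have hdouble : ∑ p ∈ (Finset.range n ×ˢ Finset.Icc 1 n).filter
        (fun p => p.1 + p.2 ≤ n), F p
      = ∑ k ∈ Finset.Icc 1 n, ∑ i ∈ Finset.range (n - k + 1), F (i, k) := by
    rw [Finset.sum_filter, Finset.sum_product]
    rw [Finset.sum_comm]
    refine Finset.sum_congr rfl fun k hk => ?_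
    rw [Finset.mem_Icc] at hk
    rw [← Finset.sum_filter]
    congr 1
    ext a
    simp only [Finset.mem_filter, Finset.mem_range]
    omega
  rw [hdouble]
  have hins : Finset.Icc 1 n = insert n (Finset.Icc 1 (n - 1)) := by
    ext a
    simp only [Finset.mem_Icc, Finset.mem_insert]
    omega
  have hnot : n ∉ Finset.Icc 1 (n - 1) := by
    simp only [Finset.mem_Icc]
    omega
  rw [hins, Finset.sum_insert hnot, mul_add, add_comm]
  congr 1
  · -- the k < n part
    rw [Finset.mul_sum]
    refine Finset.sum_congr rfl fun k hk => ?_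
    rw [Finset.mem_Icc] at hk
    have hk1 : 1 ≤ k := hk.1
    have hkn : k < n := by omega
    simp only [hF]
    rw [← Finset.sum_mul, coeff_eval hk1 hkn]
    have h2 : (2 : ℝ) ^ (n - k) * 2 ^ k = 2 ^ n := by
      rw [← pow_add]
      congr 1
      omega
    have h2k : (2 : ℝ) ^ k ≠ 0 := by positivity
    have h2n : (2 : ℝ) ^ n ≠ 0 := by positivity
    have key : (1 : ℝ) / 2 ^ n * 2 ^ (n - k) = (2⁻¹) ^ k := by
      rw [inv_pow]
      field_simp
      linear_combination h2
    linear_combination ((((n : ℝ) - k + 3) / 4) * Lw M k) * key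
  · -- the k = n part
    have : n - n + 1 = 1 := by omega
    rw [this, Finset.sum_range_one]
    have hbw : bw n 0 n = 0 := by
      rw [bw]
      split_ifs <;> omega
    rw [hF]
    simp only [hbw]
    have : n - (n + 0) = 0 := by omega
    rw [this, pow_zero, one_mul, inv_pow, one_div]

end GEval


section LwBounds
variable {A : Type*} [Fintype A] [Nonempty A] (M : A → A → Prop)

lemma Lw_nonneg (hM2 : ∀ a b : A, ∃ c : A, M a c ∧ M c b) (k : ℕ) : 0 ≤ Lw M k :=
  Real.log_nonneg (by exact_mod_cast sftLang_ncard_pos M hM2 k)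

lemma Lw_le (hM2 : ∀ a b : A, ∃ c : A, M a c ∧ M c b) (k : ℕ) :
    Lw M k ≤ (k : ℝ) * Real.log (Fintype.card A) := by
  classical
  have h1 : (sftLang M k).ncard ≤ Fintype.card A ^ k := by
    have := Set.ncard_le_ncard (Set.subset_univ (sftLang M k)) Set.finite_univ
    rwa [Set.ncard_univ, Nat.card_eq_fintype_card, Fintype.card_fun, Fintype.card_fin]
      at this
  have h2 : Real.log ((sftLang M k).ncard) ≤ Real.log ((Fintype.card A : ℝ) ^ k) := by
    apply Real.log_le_log
    · exact_mod_cast sftLang_ncard_pos M hM2 k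
    · exact_mod_cast h1
  rw [Real.log_pow] at h2
  exact h2

end LwBounds

/-- for a one-step SFT whose adjacency matrix `M` satisfies `M² > 0`,
with uniform coefficients `c_S^n = 2^{-n}`, the topological average sample complexity with
respect to the time-zero cover equals `(1/4)·∑_{k≥1} log|ℒ_k(X)| / 2^k`. -/
theorem asc_of_SFT_eq_series
    {A : Type*} [Fintype A] [Nonempty A] (M : A → A → Prop)
    (hM2 : ∀ a b : A, ∃ c : A, M a c ∧ M c b) :
    Tendsto (fun n : ℕ =>
        (1 / (n : ℝ)) * ∑ S : Finset (Fin n), (1 / 2 ^ n : ℝ) *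
          Real.log (coverNum (joinCover (sftShift M) (timeZeroCover M) S)))
      atTop
      (𝓝 ((1 / 4) * ∑' k : ℕ, Real.log ((sftLang M (k + 1)).ncard) / 2 ^ (k + 1))) := by
  classical
  set C : ℝ := max (Real.log (Fintype.card A)) 1 with hCdef
  have hC0 : 0 ≤ C := le_trans zero_le_one (le_max_right _ _)
  set t : ℕ → ℝ := fun k => (2⁻¹ : ℝ) ^ k * Lw M k with ht
  have htnn : ∀ k, 0 ≤ t k := fun k =>
    mul_nonneg (by positivity) (Lw_nonneg M hM2 k)
  have htle : ∀ k : ℕ, t k ≤ C * ((k : ℝ) * (2⁻¹) ^ k) := by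
    intro k
    have h1 : Lw M k ≤ (k : ℝ) * C :=
      le_trans (Lw_le M hM2 k) (mul_le_mul_of_nonneg_left (le_max_left _ _) (by positivity))
    calc t k = (2⁻¹ : ℝ) ^ k * Lw M k := rfl
      _ ≤ (2⁻¹ : ℝ) ^ k * ((k : ℝ) * C) :=
          mul_le_mul_of_nonneg_left h1 (by positivity)
      _ = C * ((k : ℝ) * (2⁻¹) ^ k) := by ring
  have hhalf : ‖(2⁻¹ : ℝ)‖ < 1 := by
    rw [Real.norm_eq_abs, abs_of_pos (by norm_num : (0:ℝ) < 2⁻¹)]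
    norm_num
  have hgeo1 : Summable (fun k : ℕ => (k : ℝ) * (2⁻¹) ^ k) := by
    have := summable_pow_mul_geometric_of_norm_lt_one (R := ℝ) 1 hhalf
    simpa using this
  have hgeo2 : Summable (fun k : ℕ => (k : ℝ) ^ 2 * (2⁻¹) ^ k) :=
    summable_pow_mul_geometric_of_norm_lt_one (R := ℝ) 2 hhalf
  have hts : Summable t := Summable.of_nonneg_of_le htnn htle (hgeo1.mul_left C)
  have hkts : Summable (fun k : ℕ => (k : ℝ) * t k) := by
    refine Summable.of_nonneg_of_le (fun k => mul_nonneg (by positivity) (htnn k))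
      (fun k => ?_) (hgeo2.mul_left C)
    calc (k : ℝ) * t k ≤ (k : ℝ) * (C * ((k : ℝ) * (2⁻¹) ^ k)) :=
          mul_le_mul_of_nonneg_left (htle k) (by positivity)
      _ = C * ((k : ℝ) ^ 2 * (2⁻¹) ^ k) := by ring
  have hshift : Summable (fun j : ℕ => t (j + 1)) := by
    rwa [summable_nat_add_iff]
  set T0 : ℝ := ∑' j : ℕ, t (j + 1) with hT0
  have htend1 : Tendsto (fun n : ℕ => ∑ j ∈ Finset.range n, t (j + 1)) atTop (𝓝 T0) :=
    hshift.hasSum.tendsto_sum_nat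
  have htend1' : Tendsto (fun n : ℕ => ∑ j ∈ Finset.range (n - 1), t (j + 1))
      atTop (𝓝 T0) := htend1.comp (tendsto_sub_atTop_nat 1)
  have hsum34 : Summable (fun k : ℕ => (3 + (k : ℝ)) / 4 * t k) := by
    refine ((hts.mul_left (3 / 4 : ℝ)).add (hkts.mul_left (1 / 4 : ℝ))).congr
      fun k => ?_
    ring
  set E : ℕ → ℝ := fun n =>
    (∑ k ∈ Finset.Icc 1 (n - 1), ((3 : ℝ) - k) / 4 * t k) + t n with hE
  set B : ℝ := (∑' k : ℕ, (3 + (k : ℝ)) / 4 * t k) + ∑' k : ℕ, t k with hB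
  have hEbound : ∀ n : ℕ, |E n| ≤ B := by
    intro n
    have h1 : |∑ k ∈ Finset.Icc 1 (n - 1), ((3 : ℝ) - k) / 4 * t k|
        ≤ ∑ k ∈ Finset.Icc 1 (n - 1), (3 + (k : ℝ)) / 4 * t k := by
      refine le_trans (Finset.abs_sum_le_sum_abs _ _) (Finset.sum_le_sum fun k _ => ?_)
      rw [abs_mul, abs_of_nonneg (htnn k)]
      refine mul_le_mul_of_nonneg_right ?_ (htnn k)
      have hknn : (0 : ℝ) ≤ (k : ℝ) := Nat.cast_nonneg k
      rw [abs_le]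
      constructor <;> [linarith; linarith]
    have h2 : ∑ k ∈ Finset.Icc 1 (n - 1), (3 + (k : ℝ)) / 4 * t k
        ≤ ∑' k : ℕ, (3 + (k : ℝ)) / 4 * t k := by
      refine hsum34.sum_le_tsum _ (fun k _ => ?_)
      have hknn : (0 : ℝ) ≤ (k : ℝ) := Nat.cast_nonneg k
      exact mul_nonneg (by positivity) (htnn k)
    have h3 : t n ≤ ∑' k : ℕ, t k := hts.le_tsum n fun j _ => htnn j
    calc |E n| ≤ |∑ k ∈ Finset.Icc 1 (n - 1), ((3 : ℝ) - k) / 4 * t k| + |t n| :=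
          abs_add_le _ _
      _ ≤ (∑' k : ℕ, (3 + (k : ℝ)) / 4 * t k) + ∑' k : ℕ, t k := by
          rw [abs_of_nonneg (htnn n)]
          exact add_le_add (le_trans h1 h2) h3
  have hBdiv : Tendsto (fun n : ℕ => B / n) atTop (𝓝 0) :=
    tendsto_const_div_atTop_nhds_zero_nat B
  have h2tend : Tendsto (fun n : ℕ => (1 / (n : ℝ)) * E n) atTop (𝓝 0) := by
    refine squeeze_zero_norm (fun n => ?_) hBdiv
    rw [norm_mul, Real.norm_eq_abs, Real.norm_eq_abs,
      abs_of_nonneg (by positivity : (0 : ℝ) ≤ 1 / (n : ℝ))]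
    calc (1 / (n : ℝ)) * |E n| ≤ (1 / (n : ℝ)) * B :=
          mul_le_mul_of_nonneg_left (hEbound n) (by positivity)
      _ = B / n := by rw [one_div, inv_mul_eq_div]
  have hcomb : Tendsto (fun n : ℕ =>
      1 / 4 * (∑ j ∈ Finset.range (n - 1), t (j + 1)) + (1 / (n : ℝ)) * E n)
      atTop (𝓝 (1 / 4 * T0 + 0)) := (htend1'.const_mul (1 / 4 : ℝ)).add h2tend
  have hmain : ∀ n : ℕ, 1 ≤ n →
      (1 / (n : ℝ)) * ∑ S : Finset (Fin n), (1 / 2 ^ n : ℝ) *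
          Real.log (coverNum (joinCover (sftShift M) (timeZeroCover M) S))
        = 1 / 4 * (∑ j ∈ Finset.range (n - 1), t (j + 1)) + (1 / (n : ℝ)) * E n := by
    intro n hn
    have hn' : (n : ℝ) ≠ 0 := Nat.cast_ne_zero.mpr (by omega)
    have hsumS : ∑ S : Finset (Fin n), (1 / 2 ^ n : ℝ) *
        Real.log (coverNum (joinCover (sftShift M) (timeZeroCover M) S))
        = ∑ S : Finset (Fin n), (1 / 2 ^ n : ℝ) *
            Real.log ((patt M (S.image Fin.val)).ncard) :=
      Finset.sum_congr rfl fun S _ => by rw [coverNum_join M n S]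
    rw [hsumS, G_eval M hM2 hn]
    have hW : ∑ j ∈ Finset.range (n - 1), t (j + 1)
        = ∑ k ∈ Finset.Icc 1 (n - 1), t k := by
      rw [show Finset.Icc 1 (n - 1) = Finset.Ico 1 n by
        ext a; rw [Finset.mem_Icc, Finset.mem_Ico]; omega]
      rw [Finset.sum_Ico_eq_sum_range]
      exact Finset.sum_congr rfl fun j _ => by rw [add_comm]
    have hsplit : ∑ k ∈ Finset.Icc 1 (n - 1), ((n : ℝ) - k + 3) / 4 * (2⁻¹) ^ k * Lw M k
        = (n : ℝ) / 4 * (∑ k ∈ Finset.Icc 1 (n - 1), t k)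
          + ∑ k ∈ Finset.Icc 1 (n - 1), ((3 : ℝ) - k) / 4 * t k := by
      rw [Finset.mul_sum, ← Finset.sum_add_distrib]
      refine Finset.sum_congr rfl fun k _ => ?_
      simp only [ht]
      ring
    have htn : (2⁻¹ : ℝ) ^ n * Lw M n = t n := rfl
    rw [hsplit, hW, htn]
    simp only [hE]
    field_simp
    ring
  have heq : (fun n : ℕ =>
      1 / 4 * (∑ j ∈ Finset.range (n - 1), t (j + 1)) + (1 / (n : ℝ)) * E n)
      =ᶠ[atTop] (fun n : ℕ =>
      (1 / (n : ℝ)) * ∑ S : Finset (Fin n), (1 / 2 ^ n : ℝ) *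
          Real.log (coverNum (joinCover (sftShift M) (timeZeroCover M) S))) :=
    Filter.eventually_atTop.mpr ⟨1, fun n hn => (hmain n hn).symm⟩
  have hfinal := hcomb.congr' heq
  have hval : 1 / 4 * T0 + 0
      = (1 / 4) * ∑' k : ℕ, Real.log ((sftLang M (k + 1)).ncard) / 2 ^ (k + 1) := by
    rw [add_zero, hT0]
    congr 1
    refine tsum_congr fun j => ?_
    show (2⁻¹ : ℝ) ^ (j + 1) * Lw M (j + 1) = _
    rw [Lw, inv_pow, div_eq_mul_inv, mul_comm]
  rwa [hval] at hfinal
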